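/- Let k₁, k₂, l₁, l₂ ∈ ℤ and define φ : ℝ² → ℝ⁴ by φ(u,v) = (1/√2)(cos(k₁u+k₂v), sin(k₁u+k₂v), cos(l₁u+l₂v), sin(l₁u+l₂v)). Set a = k₁²+k₂², b = l₁²+l₂² and e = ½(a+b). Then for all (u,v) ∈ ℝ²: (i) |φ(u,v)| = 1; (ii) |Δφ(u,v)|² = ½(a²+b²); and (iii) Δ(Δφ)(u,v) + 2e·Δφ(u,v) + (2e² − ½(a²+b²))·φ(u,v) = 0. -/

import Mathlib

/-!
STATEMENT 1: For φ : ℝ² → ℝ⁴,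
φ(u,v) = (1/√2)(cos(k₁u+k₂v), sin(k₁u+k₂v), cos(l₁u+l₂v), sin(l₁u+l₂v)),
with a = k₁²+k₂², b = l₁²+l₂², e = ½(a+b), one has for all (u,v):
(i) |φ(u,v)| = 1; (ii) |Δφ(u,v)|² = ½(a²+b²);
(iii) Δ(Δφ) + 2e·Δφ + (2e² − ½(a²+b²))·φ = 0.
Here Δ is the componentwise Euclidean Laplacian ∂²/∂u² + ∂²/∂v².
-/

/-- The componentwise Euclidean Laplacian of a map `ℝ² → ℝ⁴`,
`Δf = ∂²f/∂u² + ∂²f/∂v²`. -/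
noncomputable def lap2 (f : ℝ → ℝ → Fin 4 → ℝ) (u v : ℝ) : Fin 4 → ℝ :=
  fun i => iteratedDeriv 2 (fun u' => f u' v i) u + iteratedDeriv 2 (fun v' => f u v' i) v

/-- The map `φ(u,v) = (1/√2)(cos(k₁u+k₂v), sin(k₁u+k₂v), cos(l₁u+l₂v), sin(l₁u+l₂v))`. -/
noncomputable def phiT (k₁ k₂ l₁ l₂ : ℤ) (u v : ℝ) : Fin 4 → ℝ :=
  fun i => (1 / Real.sqrt 2) *
    ![Real.cos ((k₁ : ℝ) * u + (k₂ : ℝ) * v), Real.sin ((k₁ : ℝ) * u + (k₂ : ℝ) * v),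
      Real.cos ((l₁ : ℝ) * u + (l₂ : ℝ) * v), Real.sin ((l₁ : ℝ) * u + (l₂ : ℝ) * v)] i

lemma dccos (c m d x : ℝ) :
    HasDerivAt (fun x => c * Real.cos (m * x + d)) (-(c * m) * Real.sin (m * x + d)) x := by
  have h : HasDerivAt (fun x : ℝ => m * x + d) m x := by
    simpa using ((hasDerivAt_id x).const_mul m).add_const d
  have := (h.cos).const_mul c
  exact this.congr_deriv (by ring)

lemma dcsin (c m d x : ℝ) :
    HasDerivAt (fun x => c * Real.sin (m * x + d)) ((c * m) * Real.cos (m * x + d)) x := by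
  have h : HasDerivAt (fun x : ℝ => m * x + d) m x := by
    simpa using ((hasDerivAt_id x).const_mul m).add_const d
  have := (h.sin).const_mul c
  exact this.congr_deriv (by ring)

lemma it2_cos (c m d : ℝ) :
    iteratedDeriv 2 (fun x => c * Real.cos (m * x + d)) =
      fun x => -(m ^ 2) * (c * Real.cos (m * x + d)) := by
  have h1 : deriv (fun x => c * Real.cos (m * x + d)) =
      fun x => -(c * m) * Real.sin (m * x + d) := funext fun x => (dccos c m d x).deriv
  funext x
  rw [iteratedDeriv_succ, iteratedDeriv_one, h1]
  have := (dcsin (-(c * m)) m d x).deriv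
  rw [this]; ring

lemma it2_sin (c m d : ℝ) :
    iteratedDeriv 2 (fun x => c * Real.sin (m * x + d)) =
      fun x => -(m ^ 2) * (c * Real.sin (m * x + d)) := by
  have h1 : deriv (fun x => c * Real.sin (m * x + d)) =
      fun x => (c * m) * Real.cos (m * x + d) := funext fun x => (dcsin c m d x).deriv
  funext x
  rw [iteratedDeriv_succ, iteratedDeriv_one, h1]
  have := (dccos (c * m) m d x).deriv
  rw [this]; ring

lemma lap2_apply_cos (f : ℝ → ℝ → Fin 4 → ℝ) (i : Fin 4) (c m n : ℝ)
    (h : ∀ u v, f u v i = c * Real.cos (m * u + n * v)) (u v : ℝ) :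
    lap2 f u v i = -(m ^ 2 + n ^ 2) * (c * Real.cos (m * u + n * v)) := by
  have h1 : (fun u' => f u' v i) = fun u' => c * Real.cos (m * u' + n * v) :=
    funext fun u' => h u' v
  have h2 : (fun v' => f u v' i) = fun v' => c * Real.cos (n * v' + m * u) := by
    funext v'; rw [h, add_comm (m * u)]
  show iteratedDeriv 2 _ u + iteratedDeriv 2 _ v = _
  rw [h1, h2, it2_cos, it2_cos]
  simp only [add_comm (n * v) (m * u)]
  ring

lemma lap2_apply_sin (f : ℝ → ℝ → Fin 4 → ℝ) (i : Fin 4) (c m n : ℝ)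
    (h : ∀ u v, f u v i = c * Real.sin (m * u + n * v)) (u v : ℝ) :
    lap2 f u v i = -(m ^ 2 + n ^ 2) * (c * Real.sin (m * u + n * v)) := by
  have h1 : (fun u' => f u' v i) = fun u' => c * Real.sin (m * u' + n * v) :=
    funext fun u' => h u' v
  have h2 : (fun v' => f u v' i) = fun v' => c * Real.sin (n * v' + m * u) := by
    funext v'; rw [h, add_comm (m * u)]
  show iteratedDeriv 2 _ u + iteratedDeriv 2 _ v = _
  rw [h1, h2, it2_sin, it2_sin]
  simp only [add_comm (n * v) (m * u)]
  ring

section main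
variable (k₁ k₂ l₁ l₂ : ℤ)

lemma lap_phi0 (u v : ℝ) : lap2 (phiT k₁ k₂ l₁ l₂) u v 0 =
    -((k₁:ℝ) ^ 2 + (k₂:ℝ) ^ 2) * ((1 / Real.sqrt 2) * Real.cos ((k₁:ℝ) * u + (k₂:ℝ) * v)) :=
  lap2_apply_cos _ 0 _ _ _ (fun u v => by simp [phiT]) u v

lemma lap_phi1 (u v : ℝ) : lap2 (phiT k₁ k₂ l₁ l₂) u v 1 =
    -((k₁:ℝ) ^ 2 + (k₂:ℝ) ^ 2) * ((1 / Real.sqrt 2) * Real.sin ((k₁:ℝ) * u + (k₂:ℝ) * v)) :=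
  lap2_apply_sin _ 1 _ _ _ (fun u v => by simp [phiT]) u v

lemma lap_phi2 (u v : ℝ) : lap2 (phiT k₁ k₂ l₁ l₂) u v 2 =
    -((l₁:ℝ) ^ 2 + (l₂:ℝ) ^ 2) * ((1 / Real.sqrt 2) * Real.cos ((l₁:ℝ) * u + (l₂:ℝ) * v)) :=
  lap2_apply_cos _ 2 _ _ _ (fun u v => by simp [phiT]) u v

lemma lap_phi3 (u v : ℝ) : lap2 (phiT k₁ k₂ l₁ l₂) u v 3 =
    -((l₁:ℝ) ^ 2 + (l₂:ℝ) ^ 2) * ((1 / Real.sqrt 2) * Real.sin ((l₁:ℝ) * u + (l₂:ℝ) * v)) :=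
  lap2_apply_sin _ 3 _ _ _ (fun u v => by simp [phiT]) u v

lemma lap_lap0 (u v : ℝ) : lap2 (fun u' v' => lap2 (phiT k₁ k₂ l₁ l₂) u' v') u v 0 =
    -((k₁:ℝ) ^ 2 + (k₂:ℝ) ^ 2) *
      ((-((k₁:ℝ) ^ 2 + (k₂:ℝ) ^ 2) * (1 / Real.sqrt 2)) * Real.cos ((k₁:ℝ) * u + (k₂:ℝ) * v)) :=
  lap2_apply_cos _ 0 _ _ _ (fun u v => by rw [lap_phi0]; ring) u v

lemma lap_lap1 (u v : ℝ) : lap2 (fun u' v' => lap2 (phiT k₁ k₂ l₁ l₂) u' v') u v 1 =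
    -((k₁:ℝ) ^ 2 + (k₂:ℝ) ^ 2) *
      ((-((k₁:ℝ) ^ 2 + (k₂:ℝ) ^ 2) * (1 / Real.sqrt 2)) * Real.sin ((k₁:ℝ) * u + (k₂:ℝ) * v)) :=
  lap2_apply_sin _ 1 _ _ _ (fun u v => by rw [lap_phi1]; ring) u v

lemma lap_lap2 (u v : ℝ) : lap2 (fun u' v' => lap2 (phiT k₁ k₂ l₁ l₂) u' v') u v 2 =
    -((l₁:ℝ) ^ 2 + (l₂:ℝ) ^ 2) *
      ((-((l₁:ℝ) ^ 2 + (l₂:ℝ) ^ 2) * (1 / Real.sqrt 2)) * Real.cos ((l₁:ℝ) * u + (l₂:ℝ) * v)) :=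
  lap2_apply_cos _ 2 _ _ _ (fun u v => by rw [lap_phi2]; ring) u v

lemma lap_lap3 (u v : ℝ) : lap2 (fun u' v' => lap2 (phiT k₁ k₂ l₁ l₂) u' v') u v 3 =
    -((l₁:ℝ) ^ 2 + (l₂:ℝ) ^ 2) *
      ((-((l₁:ℝ) ^ 2 + (l₂:ℝ) ^ 2) * (1 / Real.sqrt 2)) * Real.sin ((l₁:ℝ) * u + (l₂:ℝ) * v)) :=
  lap2_apply_sin _ 3 _ _ _ (fun u v => by rw [lap_phi3]; ring) u v

end main

lemma comp0 (k₁ k₂ l₁ l₂ : ℤ) (a b e : ℝ)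
    (ha : a = (k₁ : ℝ) ^ 2 + (k₂ : ℝ) ^ 2) (hb : b = (l₁ : ℝ) ^ 2 + (l₂ : ℝ) ^ 2)
    (he : e = (a + b) / 2) (u v : ℝ) :
    lap2 (fun u' v' => lap2 (phiT k₁ k₂ l₁ l₂) u' v') u v 0
      + 2 * e * lap2 (phiT k₁ k₂ l₁ l₂) u v 0
      + (2 * e ^ 2 - (a ^ 2 + b ^ 2) / 2) * phiT k₁ k₂ l₁ l₂ u v 0 = 0 := by
  rw [lap_lap0, lap_phi0]
  simp only [phiT, Matrix.cons_val_zero]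
  rw [ha, hb] at he; subst he; rw [ha, hb]
  ring

lemma comp1 (k₁ k₂ l₁ l₂ : ℤ) (a b e : ℝ)
    (ha : a = (k₁ : ℝ) ^ 2 + (k₂ : ℝ) ^ 2) (hb : b = (l₁ : ℝ) ^ 2 + (l₂ : ℝ) ^ 2)
    (he : e = (a + b) / 2) (u v : ℝ) :
    lap2 (fun u' v' => lap2 (phiT k₁ k₂ l₁ l₂) u' v') u v 1
      + 2 * e * lap2 (phiT k₁ k₂ l₁ l₂) u v 1
      + (2 * e ^ 2 - (a ^ 2 + b ^ 2) / 2) * phiT k₁ k₂ l₁ l₂ u v 1 = 0 := by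
  rw [lap_lap1, lap_phi1]
  simp only [phiT, Matrix.cons_val_one, Matrix.head_cons, Matrix.cons_val_zero]
  rw [ha, hb] at he; subst he; rw [ha, hb]
  ring

lemma comp2 (k₁ k₂ l₁ l₂ : ℤ) (a b e : ℝ)
    (ha : a = (k₁ : ℝ) ^ 2 + (k₂ : ℝ) ^ 2) (hb : b = (l₁ : ℝ) ^ 2 + (l₂ : ℝ) ^ 2)
    (he : e = (a + b) / 2) (u v : ℝ) :
    lap2 (fun u' v' => lap2 (phiT k₁ k₂ l₁ l₂) u' v') u v 2
      + 2 * e * lap2 (phiT k₁ k₂ l₁ l₂) u v 2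
      + (2 * e ^ 2 - (a ^ 2 + b ^ 2) / 2) * phiT k₁ k₂ l₁ l₂ u v 2 = 0 := by
  rw [lap_lap2, lap_phi2]
  simp only [phiT, Matrix.cons_val_two, Matrix.tail_cons, Matrix.head_cons]
  rw [ha, hb] at he; subst he; rw [ha, hb]
  ring

lemma comp3 (k₁ k₂ l₁ l₂ : ℤ) (a b e : ℝ)
    (ha : a = (k₁ : ℝ) ^ 2 + (k₂ : ℝ) ^ 2) (hb : b = (l₁ : ℝ) ^ 2 + (l₂ : ℝ) ^ 2)
    (he : e = (a + b) / 2) (u v : ℝ) :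
    lap2 (fun u' v' => lap2 (phiT k₁ k₂ l₁ l₂) u' v') u v 3
      + 2 * e * lap2 (phiT k₁ k₂ l₁ l₂) u v 3
      + (2 * e ^ 2 - (a ^ 2 + b ^ 2) / 2) * phiT k₁ k₂ l₁ l₂ u v 3 = 0 := by
  rw [lap_lap3, lap_phi3]
  simp only [phiT, Matrix.cons_val_three, Matrix.tail_cons, Matrix.head_cons]
  rw [ha, hb] at he; subst he; rw [ha, hb]
  ring


theorem stmt1 (k₁ k₂ l₁ l₂ : ℤ) (a b e : ℝ)
    (ha : a = (k₁ : ℝ) ^ 2 + (k₂ : ℝ) ^ 2) (hb : b = (l₁ : ℝ) ^ 2 + (l₂ : ℝ) ^ 2)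
    (he : e = (a + b) / 2) :
    (∀ u v : ℝ, ∑ i : Fin 4, (phiT k₁ k₂ l₁ l₂ u v i) ^ 2 = 1) ∧
    (∀ u v : ℝ, ∑ i : Fin 4, (lap2 (phiT k₁ k₂ l₁ l₂) u v i) ^ 2 = (a ^ 2 + b ^ 2) / 2) ∧
    (∀ u v : ℝ, ∀ i : Fin 4,
        lap2 (fun u' v' => lap2 (phiT k₁ k₂ l₁ l₂) u' v') u v i
          + 2 * e * lap2 (phiT k₁ k₂ l₁ l₂) u v i
          + (2 * e ^ 2 - (a ^ 2 + b ^ 2) / 2) * phiT k₁ k₂ l₁ l₂ u v i = 0) := by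
  have hs : Real.sqrt 2 ^ 2 = 2 := Real.sq_sqrt (by norm_num)
  have hs0 : Real.sqrt 2 ≠ 0 := by positivity
  refine ⟨fun u v => ?_, fun u v => ?_, fun u v i => ?_⟩
  · have h1 := Real.sin_sq_add_cos_sq ((k₁:ℝ) * u + (k₂:ℝ) * v)
    have h2 := Real.sin_sq_add_cos_sq ((l₁:ℝ) * u + (l₂:ℝ) * v)
    rw [Fin.sum_univ_four]
    simp only [phiT, Matrix.cons_val_zero, Matrix.cons_val_one, Matrix.head_cons,
      Matrix.cons_val_two, Matrix.tail_cons, Matrix.cons_val_three]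
    field_simp
    nlinarith [h1, h2, hs, Real.sin_sq_add_cos_sq (u * (l₁:ℝ) + v * (l₂:ℝ))]
  · have h1 := Real.sin_sq_add_cos_sq ((k₁:ℝ) * u + (k₂:ℝ) * v)
    have h2 := Real.sin_sq_add_cos_sq ((l₁:ℝ) * u + (l₂:ℝ) * v)
    rw [Fin.sum_univ_four, lap_phi0, lap_phi1, lap_phi2, lap_phi3, ha, hb]
    field_simp
    rw [hs]
    linear_combination (2 * ((k₁:ℝ) ^ 2 + (k₂:ℝ) ^ 2) ^ 2) * (Real.sin_sq_add_cos_sq ((k₁:ℝ) * u + (k₂:ℝ) * v)) + (2 * ((l₁:ℝ) ^ 2 + (l₂:ℝ) ^ 2) ^ 2) * (Real.sin_sq_add_cos_sq (u * (l₁:ℝ) + v * (l₂:ℝ)))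
  · fin_cases i
    · exact comp0 k₁ k₂ l₁ l₂ a b e ha hb he u v
    · exact comp1 k₁ k₂ l₁ l₂ a b e ha hb he u v
    · exact comp2 k₁ k₂ l₁ l₂ a b e ha hb he u v
    · exact comp3 k₁ k₂ l₁ l₂ a b e ha hb he u v
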